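/- Let (R,m) be a one-dimensional Cohen–Macaulay local ring and I a regular trace ideal. If I² ⊆ (x) for some nonzerodivisor x ∈ I, then I = (x) : I. -/

import Mathlib

open nonZeroDivisors IsLocalRing

/-- The trace ideal of an `R`-module `M`. -/
noncomputable def traceIdeal (R : Type*) [CommRing R] (M : Type*) [AddCommGroup M]
    [Module R M] : Ideal R :=
  ⨆ f : M →ₗ[R] R, LinearMap.range f

/-- Let `(R,m)` be a one-dimensional Cohen–Macaulay local ring and `I` a regular
trace ideal.  If `I² ⊆ (x)` for some nonzerodivisor `x ∈ I`, then `I = (x) : I`. -/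
theorem trace_eq_colon (R : Type*) [CommRing R] [IsLocalRing R] [IsNoetherianRing R]
    (hdim : ringKrullDim R = 1)
    (hCM : ∃ r ∈ maximalIdeal R, r ∈ R⁰)
    (I : Ideal R) (hreg : ∃ x ∈ I, x ∈ R⁰)
    (htrace : traceIdeal R I = I)
    (x : R) (hxI : x ∈ I) (hx : x ∈ R⁰)
    (hsq : I ^ 2 ≤ Ideal.span {x}) :
    I = (Ideal.span {x}).colon I := by
  have hcancel : ∀ {u v : R}, x * u = x * v → u = v := by
    intro u v h
    have h0 : (u - v) * x = 0 := by linear_combination h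
    exact sub_eq_zero.mp (mem_nonZeroDivisors_iff_right.mp hx _ h0)
  apply le_antisymm
  · intro a ha
    rw [Submodule.mem_colon]
    intro b hb
    exact hsq (by rw [pow_two]; exact Ideal.mul_mem_mul ha hb)
  · intro r hr
    have hdiv : ∀ a : I, ∃ s, r * (a : R) = x * s := by
      intro a
      have h1 := Submodule.mem_colon.mp hr a a.2
      rw [smul_eq_mul, Ideal.mem_span_singleton] at h1
      obtain ⟨s, hs⟩ := h1
      exact ⟨s, hs⟩
    choose s hs using hdiv
    let f : I →ₗ[R] R :=
      { toFun := s
        map_add' := by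
          intro a b
          apply hcancel
          rw [mul_add, ← hs, ← hs, ← hs]
          push_cast
          ring
        map_smul' := by
          intro c a
          apply hcancel
          have h1 := hs (c • a)
          have h2 := hs a
          simp only [RingHom.id_apply, smul_eq_mul, Submodule.coe_smul] at *
          linear_combination -h1 + c * h2 }
    have hr' : r = s ⟨x, hxI⟩ := by
      apply hcancel
      rw [← hs ⟨x, hxI⟩]
      ring
    have hmem : r ∈ LinearMap.range f := ⟨⟨x, hxI⟩, hr'.symm⟩
    rw [← htrace]
    exact le_iSup (fun g : I →ₗ[R] R => LinearMap.range g) f hmem
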